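/- Let n ≥ 2, A ∈ ℂ with A ≠ 0, and λ_1,…,λ_n ∈ ℂ with λ_k² ≠ λ_ℓ² for all k ≠ ℓ. Define Ψ : ℝ^n → ℂ by Ψ(x_1,…,x_n) = (1/(2i)^n) Σ_{P∈S_n} Σ_{ε∈{±1}^n} (Π_{p=1}^n ε_p e^{i ε_p x_p λ_{P(p)}}) · A[ε_1 λ_{P(1)}, …, ε_n λ_{P(n)}]. Then Ψ satisfies the two-body matching condition of the attractive delta-Bose gas with coupling c̄ = 1: for every j ∈ {1,…,n−1} and all real values of the coordinates, ( ∂_{x_{j+1}} Ψ − ∂_{x_j} Ψ + Ψ )(x_1,…,x_n) = 0 whenever x_{j+1} = x_j. -/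

import Mathlib

open Complex Finset

/-- The sign `±1 ∈ ℂ` associated to a boolean. -/
def pmSign (b : Bool) : ℂ := if b then 1 else -1

/-- The half-space Bethe amplitude
`A[μ₁,…,μ_n] = Π_{k<ℓ} (1 + i/(μ_ℓ − μ_k))(1 + i/(μ_ℓ + μ_k)) · Π_ℓ (1 + i μ_ℓ/A)`. -/
noncomputable def betheAmp {n : ℕ} (A : ℂ) (μ : Fin n → ℂ) : ℂ :=
  (∏ p ∈ Finset.univ.filter (fun p : Fin n × Fin n => p.1 < p.2),
    (1 + I / (μ p.2 - μ p.1)) * (1 + I / (μ p.2 + μ p.1))) *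
  ∏ l : Fin n, (1 + I * μ l / A)

/-- The half-space Bethe wavefunction. -/
noncomputable def bethePsi {n : ℕ} (A : ℂ) (lam : Fin n → ℂ) (x : Fin n → ℝ) : ℂ :=
  (1 / (2 * I) ^ n) *
    ∑ P : Equiv.Perm (Fin n), ∑ ε : Fin n → Bool,
      (∏ p : Fin n, pmSign (ε p) * Complex.exp (I * pmSign (ε p) * (x p : ℂ) * lam (P p))) *
        betheAmp A (fun p => pmSign (ε p) * lam (P p))

lemma pmSign_sq (b : Bool) : pmSign b * pmSign b = 1 := by cases b <;> simp [pmSign]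

lemma swap_lt_of_lt {n : ℕ} {a b k l : Fin n} (hab : (a:ℕ) + 1 = (b:ℕ)) (hkl : k < l)
    (hne : ¬(k = a ∧ l = b)) : Equiv.swap a b k < Equiv.swap a b l := by
  have hkl' : (k:ℕ) < (l:ℕ) := hkl
  rcases eq_or_ne k a with hka | hka
  · have hkv : (k:ℕ) = (a:ℕ) := by rw [hka]
    rcases eq_or_ne l b with hlb | hlb
    · exact absurd ⟨hka, hlb⟩ hne
    · have hlv : (l:ℕ) ≠ (b:ℕ) := fun h => hlb (Fin.ext h)
      have hla : l ≠ a := by intro h; rw [h] at hkl'; omega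
      rw [hka, Equiv.swap_apply_left, Equiv.swap_apply_of_ne_of_ne hla hlb]
      exact Fin.lt_def.2 (by omega)
  · have hkv : (k:ℕ) ≠ (a:ℕ) := fun h => hka (Fin.ext h)
    rcases eq_or_ne k b with hkb | hkb
    · have hkv' : (k:ℕ) = (b:ℕ) := by rw [hkb]
      have hla : l ≠ a := fun h => by rw [h] at hkl'; omega
      have hlb : l ≠ b := fun h => by rw [h] at hkl'; omega
      rw [hkb, Equiv.swap_apply_right, Equiv.swap_apply_of_ne_of_ne hla hlb]
      exact Fin.lt_def.2 (by omega)
    · have hkv' : (k:ℕ) ≠ (b:ℕ) := fun h => hkb (Fin.ext h)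
      rw [Equiv.swap_apply_of_ne_of_ne hka hkb]
      rcases eq_or_ne l a with hla | hla
      · have hlv : (l:ℕ) = (a:ℕ) := by rw [hla]
        rw [hla, Equiv.swap_apply_left]
        exact Fin.lt_def.2 (by omega)
      · rcases eq_or_ne l b with hlb | hlb
        · have hlv : (l:ℕ) = (b:ℕ) := by rw [hlb]
          rw [hlb, Equiv.swap_apply_right]
          exact Fin.lt_def.2 (by omega)
        · rw [Equiv.swap_apply_of_ne_of_ne hla hlb]
          exact hkl

lemma betheAmp_swap {n : ℕ} (A : ℂ) (μ : Fin n → ℂ) {a b : Fin n} (hab : (a:ℕ)+1 = (b:ℕ))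
    (hd : μ b - μ a ≠ 0) :
    betheAmp A (μ ∘ Equiv.swap a b) * (μ b - μ a + I)
      = betheAmp A μ * (μ b - μ a - I) := by
  classical
  set σ := Equiv.swap a b with hσ
  have hab' : a < b := Fin.lt_def.2 (by omega)
  unfold betheAmp
  have hG : (∏ l : Fin n, (1 + I * (μ ∘ σ) l / A)) = ∏ l : Fin n, (1 + I * μ l / A) :=
    Equiv.prod_comp σ (fun l => 1 + I * μ l / A)
  set S := Finset.univ.filter (fun p : Fin n × Fin n => p.1 < p.2) with hS
  have hmem : (a, b) ∈ S := by simp [hS, hab']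
  have hτS : ∀ p : Fin n × Fin n, p ∈ S →
      (if p = (a,b) then (a,b) else (σ p.1, σ p.2)) ∈ S := by
    intro p hp
    split_ifs with h
    · exact hmem
    · have hp' : p.1 < p.2 := by simpa [hS] using hp
      have hne : ¬(p.1 = a ∧ p.2 = b) := by
        rintro ⟨h1, h2⟩; exact h (Prod.ext h1 h2)
      simp only [hS, Finset.mem_filter, Finset.mem_univ, true_and]
      exact swap_lt_of_lt hab hp' hne
  have hτne : ∀ p : Fin n × Fin n, p ∈ S → p ≠ (a,b) → (σ p.1, σ p.2) ≠ (a, b) := by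
    intro p hp _ h
    have h1' : σ p.1 = a := congrArg Prod.fst h
    have h2' : σ p.2 = b := congrArg Prod.snd h
    have h1 : p.1 = b := by
      calc p.1 = σ (σ p.1) := (Equiv.swap_apply_self a b p.1).symm
        _ = σ a := by rw [h1']
        _ = b := Equiv.swap_apply_left a b
    have h2 : p.2 = a := by
      calc p.2 = σ (σ p.2) := (Equiv.swap_apply_self a b p.2).symm
        _ = σ b := by rw [h2']
        _ = a := Equiv.swap_apply_right a b
    have hp' : p.1 < p.2 := by simpa [hS] using hp
    rw [h1, h2] at hp'
    exact absurd hp' (not_lt.2 hab'.le)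
  have hτinv : ∀ p : Fin n × Fin n, p ∈ S →
      (if ((if p = (a,b) then (a,b) else (σ p.1, σ p.2)) : Fin n × Fin n) = (a,b)
        then (a,b) else (σ (if p = (a,b) then (a,b) else (σ p.1, σ p.2)).1,
          σ (if p = (a,b) then (a,b) else (σ p.1, σ p.2)).2)) = p := by
    intro p hp
    by_cases h : p = (a, b)
    · simp [h]
    · rw [if_neg h, if_neg (hτne p hp h)]
      simp [hσ, Equiv.swap_apply_self]
  have hpair : (∏ p ∈ S, (1 + I / ((μ ∘ σ) p.2 - (μ ∘ σ) p.1)) * (1 + I / ((μ ∘ σ) p.2 + (μ ∘ σ) p.1)))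
      = ∏ p ∈ S, (if p = (a, b) then (1 + I / (μ a - μ b)) * (1 + I / (μ a + μ b))
          else (1 + I / (μ p.2 - μ p.1)) * (1 + I / (μ p.2 + μ p.1))) := by
    refine Finset.prod_bij' (fun p _ => if p = (a,b) then (a,b) else (σ p.1, σ p.2))
      (fun p _ => if p = (a,b) then (a,b) else (σ p.1, σ p.2)) hτS hτS
      (fun p hp => hτinv p hp) (fun p hp => hτinv p hp) ?_
    intro p hp
    by_cases h : p = (a, b)
    · rw [if_pos h, if_pos rfl, h]
      simp [hσ, Equiv.swap_apply_left, Equiv.swap_apply_right, Function.comp]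
    · rw [if_neg h, if_neg (hτne p hp h)]
      simp [Function.comp]
  rw [hG, hpair]
  rw [← Finset.mul_prod_erase S _ hmem, ← Finset.mul_prod_erase S
    (fun p => (1 + I / (μ p.2 - μ p.1)) * (1 + I / (μ p.2 + μ p.1))) hmem]
  rw [Finset.prod_congr rfl (fun p hp => if_neg (Finset.ne_of_mem_erase hp))]
  rw [if_pos rfl]
  have hd' : μ a - μ b ≠ 0 := fun h => hd (by rw [← neg_sub] at h; simpa using neg_eq_zero.1 h)
  have key : (1 + I / (μ a - μ b)) * (1 + I / (μ a + μ b)) * (μ b - μ a + I)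
      = (1 + I / (μ b - μ a)) * (1 + I / (μ b + μ a)) * (μ b - μ a - I) := by
    have h : I / (μ b - μ a) * (μ b - μ a) = I := div_mul_cancel₀ I hd
    have hrw : μ a - μ b = -(μ b - μ a) := by ring
    rw [hrw, div_neg, show μ b + μ a = μ a + μ b from add_comm _ _]
    linear_combination (-2 * (1 + I / (μ a + μ b))) * h
  linear_combination ((∏ p ∈ S.erase (a,b), (1 + I / (μ p.2 - μ p.1)) * (1 + I / (μ p.2 + μ p.1))) *
    (∏ l : Fin n, (1 + I * μ l / A))) * key

lemma expProd_swap {n : ℕ} (lam : Fin n → ℂ) (x : Fin n → ℝ) {a b : Fin n} (hx : x a = x b)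
    (P : Equiv.Perm (Fin n)) (ε : Fin n → Bool) :
    (∏ p : Fin n, pmSign (ε (Equiv.swap a b p)) *
      Complex.exp (I * pmSign (ε (Equiv.swap a b p)) * (x p : ℂ) * lam (P (Equiv.swap a b p))))
    = ∏ p : Fin n, pmSign (ε p) * Complex.exp (I * pmSign (ε p) * (x p : ℂ) * lam (P p)) := by
  have hx' : ∀ p, (x p : ℂ) = (x (Equiv.swap a b p) : ℂ) := by
    intro p
    rcases eq_or_ne p a with h | h
    · rw [h, Equiv.swap_apply_left, hx]
    · rcases eq_or_ne p b with h2 | h2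
      · rw [h2, Equiv.swap_apply_right, hx]
      · rw [Equiv.swap_apply_of_ne_of_ne h h2]
  calc (∏ p : Fin n, pmSign (ε (Equiv.swap a b p)) *
      Complex.exp (I * pmSign (ε (Equiv.swap a b p)) * (x p : ℂ) * lam (P (Equiv.swap a b p))))
      = ∏ p : Fin n, pmSign (ε (Equiv.swap a b p)) *
        Complex.exp (I * pmSign (ε (Equiv.swap a b p)) * (x (Equiv.swap a b p) : ℂ) *
          lam (P (Equiv.swap a b p))) :=
        Finset.prod_congr rfl fun p _ => by rw [← hx' p]
    _ = _ := Equiv.prod_comp (Equiv.swap a b)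
        (fun q => pmSign (ε q) * Complex.exp (I * pmSign (ε q) * (x q : ℂ) * lam (P q)))

lemma bethePsi_hasDerivAt {n : ℕ} (A : ℂ) (lam : Fin n → ℂ) (x : Fin n → ℝ) (c : Fin n) :
    HasDerivAt (fun y : ℝ => bethePsi A lam (Function.update x c y))
      ((1 / (2 * I) ^ n) * ∑ P : Equiv.Perm (Fin n), ∑ ε : Fin n → Bool,
        (I * pmSign (ε c) * lam (P c)) *
          ((∏ p : Fin n, pmSign (ε p) * Complex.exp (I * pmSign (ε p) * (x p : ℂ) * lam (P p))) *
            betheAmp A (fun p => pmSign (ε p) * lam (P p)))) (x c) := by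
  unfold bethePsi
  apply HasDerivAt.const_mul
  apply HasDerivAt.fun_sum
  intro P _
  apply HasDerivAt.fun_sum
  intro ε _
  set m := I * pmSign (ε c) * lam (P c) with hm
  set C := ∏ p ∈ Finset.univ.erase c,
    pmSign (ε p) * Complex.exp (I * pmSign (ε p) * (x p : ℂ) * lam (P p)) with hC
  have hfun : ∀ y : ℝ,
      (∏ p : Fin n, pmSign (ε p) *
        Complex.exp (I * pmSign (ε p) * ((Function.update x c y p : ℝ) : ℂ) * lam (P p)))
      = (pmSign (ε c) * Complex.exp (m * (y : ℂ))) * C := by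
    intro y
    rw [← Finset.mul_prod_erase Finset.univ _ (Finset.mem_univ c), Function.update_self]
    have harg : I * pmSign (ε c) * (y : ℂ) * lam (P c) = m * (y : ℂ) := by rw [hm]; ring
    rw [harg]
    congr 1
    exact Finset.prod_congr rfl fun p hp => by
      rw [Function.update_of_ne (Finset.ne_of_mem_erase hp)]
  have hexp : HasDerivAt (fun y : ℝ => Complex.exp (m * (y : ℂ)))
      (m * Complex.exp (m * ((x c : ℝ) : ℂ))) (x c) := by
    have h1 : HasDerivAt (fun y : ℝ => ((y : ℝ) : ℂ)) 1 (x c) := by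
      simpa using (hasDerivAt_id (x c)).ofReal_comp
    have h2 := (h1.const_mul m).cexp
    convert h2 using 1
    ring
  have h3 := ((hexp.const_mul (pmSign (ε c))).mul_const C).mul_const
    (betheAmp A (fun p => pmSign (ε p) * lam (P p)))
  have heq : (fun y : ℝ => (∏ p : Fin n, pmSign (ε p) *
        Complex.exp (I * pmSign (ε p) * ((Function.update x c y p : ℝ) : ℂ) * lam (P p))) *
        betheAmp A (fun p => pmSign (ε p) * lam (P p)))
      = fun y : ℝ => pmSign (ε c) * Complex.exp (m * (y : ℂ)) * C *
          betheAmp A (fun p => pmSign (ε p) * lam (P p)) := by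
    funext y; rw [hfun y]
  rw [heq]
  refine h3.congr_deriv ?_
  have hx0 : (∏ p : Fin n, pmSign (ε p) *
      Complex.exp (I * pmSign (ε p) * ((x p : ℝ) : ℂ) * lam (P p)))
      = (pmSign (ε c) * Complex.exp (m * ((x c : ℝ) : ℂ))) * C := by
    have h := hfun (x c)
    rwa [Function.update_eq_self] at h
  rw [hx0]; ring

/-- **Two-body matching condition of the attractive delta-Bose gas (`c̄ = 1`)** for the
half-space Bethe wavefunction: for all adjacent coordinates `j, j+1` and all points with
`x_{j+1} = x_j`, `(∂_{x_{j+1}}Ψ − ∂_{x_j}Ψ + Ψ)(x) = 0`. -/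
theorem bethe_matching_condition (n : ℕ) (hn : 2 ≤ n) (A : ℂ) (hA : A ≠ 0)
    (lam : Fin n → ℂ) (hll : ∀ k l, k ≠ l → lam k ^ 2 ≠ lam l ^ 2) :
    ∀ (j : ℕ) (hj : j + 1 < n) (x : Fin n → ℝ),
      x ⟨j + 1, hj⟩ = x ⟨j, by omega⟩ →
      deriv (fun y : ℝ => bethePsi A lam (Function.update x ⟨j + 1, hj⟩ y)) (x ⟨j + 1, hj⟩)
        - deriv (fun y : ℝ => bethePsi A lam (Function.update x ⟨j, by omega⟩ y))
            (x ⟨j, by omega⟩)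
        + bethePsi A lam x = 0 := by
  intro j hj x hx
  have hj' : j < n := by omega
  rw [(bethePsi_hasDerivAt A lam x ⟨j + 1, hj⟩).deriv,
    (bethePsi_hasDerivAt A lam x ⟨j, hj'⟩).deriv]
  unfold bethePsi
  rw [← mul_sub, ← mul_add]
  apply mul_eq_zero_of_right
  simp only [← Finset.sum_sub_distrib, ← Finset.sum_add_distrib]
  rw [← Finset.sum_product']
  set a : Fin n := ⟨j, hj'⟩ with ha
  set b : Fin n := ⟨j + 1, hj⟩ with hb
  have hab : (a : ℕ) + 1 = (b : ℕ) := rfl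
  refine Finset.sum_involution
    (fun q _ => (q.1 * Equiv.swap a b, fun p => q.2 (Equiv.swap a b p))) ?_ ?_
    (fun q _ => Finset.mem_product.2 ⟨Finset.mem_univ _, Finset.mem_univ _⟩) ?_
  · -- cancellation
    rintro ⟨P, ε⟩ -
    dsimp only
    have hswa : Equiv.swap a b a = b := Equiv.swap_apply_left a b
    have hswb : Equiv.swap a b b = a := Equiv.swap_apply_right a b
    simp only [Equiv.Perm.mul_apply, hswa, hswb]
    rw [expProd_swap lam x hx.symm P ε]
    have hAmpσ : betheAmp A
        (fun p => pmSign (ε (Equiv.swap a b p)) * lam (P (Equiv.swap a b p)))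
        = betheAmp A ((fun p => pmSign (ε p) * lam (P p)) ∘ Equiv.swap a b) := rfl
    rw [hAmpσ]
    have habne : a ≠ b := by
      intro h
      have := congrArg Fin.val h
      simp [ha, hb] at this
    have hd : (fun p => pmSign (ε p) * lam (P p)) b
        - (fun p => pmSign (ε p) * lam (P p)) a ≠ 0 := by
      simp only
      intro h0
      have he : pmSign (ε b) * lam (P b) = pmSign (ε a) * lam (P a) := sub_eq_zero.mp h0
      have h2 : (pmSign (ε b) * lam (P b)) * (pmSign (ε b) * lam (P b))
          = (pmSign (ε a) * lam (P a)) * (pmSign (ε a) * lam (P a)) := by rw [he]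
      have hsq : lam (P b) ^ 2 = lam (P a) ^ 2 := by
        linear_combination h2 - (lam (P b) * lam (P b)) * pmSign_sq (ε b)
          + (lam (P a) * lam (P a)) * pmSign_sq (ε a)
      exact hll (P b) (P a) (fun h => habne (P.injective h).symm) hsq
    have hsw := betheAmp_swap A (fun p => pmSign (ε p) * lam (P p)) hab hd
    simp only at hsw hd
    linear_combination
      (-((∏ p : Fin n, pmSign (ε p) *
          Complex.exp (I * pmSign (ε p) * (x p : ℂ) * lam (P p))) * I)) * hsw
      + ((∏ p : Fin n, pmSign (ε p) *
          Complex.exp (I * pmSign (ε p) * (x p : ℂ) * lam (P p))) *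
        (betheAmp A (fun p => pmSign (ε p) * lam (P p))
          + betheAmp A ((fun p => pmSign (ε p) * lam (P p)) ∘ Equiv.swap a b)))
        * Complex.I_mul_I
  · -- g moves every point
    rintro ⟨P, ε⟩ - -
    intro h
    simp only at h
    have hP : P * Equiv.swap a b = P := congrArg Prod.fst h
    have h1 : P b = P a := by
      rw [← Equiv.swap_apply_left a b, ← Equiv.Perm.mul_apply, hP]
    have h2 : b = a := P.injective h1
    have := congrArg Fin.val h2
    simp [ha, hb] at this
  · -- involution
    rintro ⟨P, ε⟩ -
    dsimp only
    refine Prod.ext ?_ ?_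
    · simp only
      rw [mul_assoc, Equiv.swap_mul_self, mul_one]
    · funext p
      simp [Equiv.swap_apply_self]
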